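/- Let γ > 1 and let A : ℝ → GL⁺(3,ℝ) be a C² solution of A''(t) = (det A(t))^{1-γ}(A(t)⁻¹)ᵀ. Then there exist constants 0 < c ≤ C such that c(1+|t|)² ≤ tr(A(t)A(t)ᵀ) ≤ C(1+|t|)² for all t ∈ ℝ. -/

import Mathlib

set_option maxHeartbeats 1000000

open Matrix Filter Topology
noncomputable section
attribute [local instance] Matrix.normedAddCommGroup Matrix.normedSpace

abbrev M3 := Matrix (Fin 3) (Fin 3) ℝ

/- Auxiliary lemmas -/

lemma entryD {f : ℝ → M3} {f' : M3} {t : ℝ} (h : HasDerivAt f f' t) (i j : Fin 3) :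
    HasDerivAt (fun s => f s i j) (f' i j) t :=
  hasDerivAt_pi.mp (hasDerivAt_pi.mp h i) j

lemma traceMulT_key (M N : M3) : trace (M * Nᵀ) = ∑ i, ∑ j, M i j * N i j := by
  simp [Matrix.trace, Matrix.mul_apply, Matrix.diag]

lemma traceMulT {f g : ℝ → M3} {f' g' : M3} {t : ℝ}
    (hf : HasDerivAt f f' t) (hg : HasDerivAt g g' t) :
    HasDerivAt (fun s => trace (f s * (g s)ᵀ))
      (trace (f' * (g t)ᵀ) + trace (f t * g'ᵀ)) t := by
  have h : HasDerivAt (fun s => ∑ i : Fin 3, ∑ j : Fin 3, f s i j * g s i j)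
      (∑ i : Fin 3, ∑ j : Fin 3, (f' i j * g t i j + f t i j * g' i j)) t := by
    refine HasDerivAt.fun_sum fun i _ => HasDerivAt.fun_sum fun j _ => ?_
    exact (entryD hf i j).mul (entryD hg i j)
  simp only [traceMulT_key]
  convert h using 1
  rw [← Finset.sum_add_distrib]
  refine Finset.sum_congr rfl fun i _ => ?_
  rw [← Finset.sum_add_distrib]

lemma traceMulT_nonneg (M : M3) : 0 ≤ trace (M * Mᵀ) := by
  rw [traceMulT_key]
  exact Finset.sum_nonneg fun i _ => Finset.sum_nonneg fun j _ => mul_self_nonneg _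

lemma detD {f : ℝ → M3} {f' : M3} {t : ℝ} (hf : HasDerivAt f f' t) :
    HasDerivAt (fun s => (f s).det) (trace (adjugate (f t) * f')) t := by
  have e := fun i j => entryD hf i j
  have h : HasDerivAt (fun s =>
      f s 0 0 * f s 1 1 * f s 2 2 - f s 0 0 * f s 1 2 * f s 2 1 -
      f s 0 1 * f s 1 0 * f s 2 2 + f s 0 1 * f s 1 2 * f s 2 0 +
      f s 0 2 * f s 1 0 * f s 2 1 - f s 0 2 * f s 1 1 * f s 2 0)
      ((f' 0 0 * f t 1 1 + f t 0 0 * f' 1 1) * f t 2 2 + f t 0 0 * f t 1 1 * f' 2 2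
      - ((f' 0 0 * f t 1 2 + f t 0 0 * f' 1 2) * f t 2 1 + f t 0 0 * f t 1 2 * f' 2 1)
      - ((f' 0 1 * f t 1 0 + f t 0 1 * f' 1 0) * f t 2 2 + f t 0 1 * f t 1 0 * f' 2 2)
      + ((f' 0 1 * f t 1 2 + f t 0 1 * f' 1 2) * f t 2 0 + f t 0 1 * f t 1 2 * f' 2 0)
      + ((f' 0 2 * f t 1 0 + f t 0 2 * f' 1 0) * f t 2 1 + f t 0 2 * f t 1 0 * f' 2 1)
      - ((f' 0 2 * f t 1 1 + f t 0 2 * f' 1 1) * f t 2 0 + f t 0 2 * f t 1 1 * f' 2 0)) t := by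
    exact (((((((e 0 0).mul (e 1 1)).mul (e 2 2)).sub (((e 0 0).mul (e 1 2)).mul (e 2 1))).sub
      (((e 0 1).mul (e 1 0)).mul (e 2 2))).add (((e 0 1).mul (e 1 2)).mul (e 2 0))).add
      (((e 0 2).mul (e 1 0)).mul (e 2 1))).sub (((e 0 2).mul (e 1 1)).mul (e 2 0))
  have hdet : (fun s => (f s).det) = (fun s =>
      f s 0 0 * f s 1 1 * f s 2 2 - f s 0 0 * f s 1 2 * f s 2 1 -
      f s 0 1 * f s 1 0 * f s 2 2 + f s 0 1 * f s 1 2 * f s 2 0 +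
      f s 0 2 * f s 1 0 * f s 2 1 - f s 0 2 * f s 1 1 * f s 2 0) := by
    funext s; rw [Matrix.det_fin_three]
  rw [hdet]
  convert h using 1
  rw [Matrix.trace]
  simp [Matrix.adjugate_fin_three, Matrix.mul_apply, Fin.sum_univ_three, Matrix.diag]
  ring

lemma quad_lower (X V W : ℝ → ℝ) (hX : ∀ t, HasDerivAt X (V t) t)
    (hV : ∀ t, HasDerivAt V (W t) t) (κ : ℝ) (hW : ∀ t, κ ≤ W t) :
    ∀ t, X 0 + V 0 * t + κ / 2 * t ^ 2 ≤ X t := by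
  have hφ : ∀ t, HasDerivAt (fun s => V s - κ * s) (W t - κ) t := by
    intro t
    have := (hV t).fun_sub ((hasDerivAt_id t).const_mul κ)
    simpa using this
  have hφmono : Monotone (fun s => V s - κ * s) := by
    apply monotone_of_deriv_nonneg
    · exact fun t => (hφ t).differentiableAt
    · intro t; rw [(hφ t).deriv]; linarith [hW t]
  set g : ℝ → ℝ := fun s => X s - X 0 - V 0 * s - κ / 2 * s ^ 2 with hgdef
  have hg : ∀ t, HasDerivAt g (V t - V 0 - κ * t) t := by
    intro t
    have : HasDerivAt (fun s : ℝ => κ / 2 * s ^ 2) (κ / 2 * (2 * t)) t := by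
      simpa using ((hasDerivAt_pow 2 t).const_mul (κ / 2))
    have h2 := (((hX t).sub_const (X 0)).fun_sub ((hasDerivAt_id t).const_mul (V 0))).fun_sub this
    exact h2.congr_deriv (by ring)
  have hderiv : ∀ t, deriv g t = V t - V 0 - κ * t := fun t => (hg t).deriv
  have hg0 : g 0 = 0 := by simp [hgdef]
  have key : ∀ t, 0 ≤ g t := by
    intro t
    rcases le_total 0 t with ht | ht
    · have hmono : MonotoneOn g (Set.Ici (0:ℝ)) := by
        apply monotoneOn_of_deriv_nonneg (convex_Ici 0)
        · exact fun s _ => (hg s).differentiableAt.continuousAt.continuousWithinAt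
        · exact fun s _ => ((hg s).differentiableAt).differentiableWithinAt
        · intro s hs
          rw [hderiv s]
          have := hφmono (le_of_lt (by simpa using hs) : (0:ℝ) ≤ s)
          simp only at this; linarith
      have := hmono (Set.self_mem_Ici) (Set.mem_Ici.mpr ht) ht
      linarith [hg0 ▸ this]
    · have hanti : AntitoneOn g (Set.Iic (0:ℝ)) := by
        apply antitoneOn_of_deriv_nonpos (convex_Iic 0)
        · exact fun s _ => (hg s).differentiableAt.continuousAt.continuousWithinAt
        · exact fun s _ => ((hg s).differentiableAt).differentiableWithinAt
        · intro s hs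
          rw [hderiv s]
          have := hφmono (le_of_lt (by simpa using hs) : s ≤ (0:ℝ))
          simp only at this; linarith
      have := hanti (Set.mem_Iic.mpr ht) (Set.self_mem_Iic) ht
      linarith [hg0 ▸ this]
  intro t
  have := key t
  simp only [hgdef] at this
  linarith

/-- quadratic growth of tr(A Aᵀ) for compressible affine motion. -/
theorem stmt5 (γ : ℝ) (hγ : 1 < γ) (A : ℝ → M3)
    (hA : ContDiff ℝ 2 A)
    (hdet : ∀ t : ℝ, 0 < (A t).det)
    (hODE : ∀ t : ℝ, deriv (deriv A) t = ((A t).det ^ (1 - γ)) • ((A t)⁻¹)ᵀ) :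
    ∃ c C : ℝ, 0 < c ∧ c ≤ C ∧ ∀ t : ℝ,
      c * (1 + |t|) ^ 2 ≤ Matrix.trace (A t * (A t)ᵀ) ∧
      Matrix.trace (A t * (A t)ᵀ) ≤ C * (1 + |t|) ^ 2 := by
  have hγ1 : (0:ℝ) < γ - 1 := by linarith
  set A1 := deriv A with hA1def
  set A2 := deriv A1 with hA2def
  have hdiff : Differentiable ℝ A := hA.differentiable (by norm_num)
  have h1 : ∀ t, HasDerivAt A (A1 t) t := fun t => (hdiff t).hasDerivAt
  have hA1cd : ContDiff ℝ 1 A1 := by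
    have h11 : ContDiff ℝ ((1:ℕ) + 1) A := by exact_mod_cast hA
    exact (contDiff_succ_iff_deriv.mp h11).2.2
  have h2 : ∀ t, HasDerivAt A1 (A2 t) t := fun t =>
    ((hA1cd.differentiable (by norm_num)) t).hasDerivAt
  -- scalar quantities
  set X : ℝ → ℝ := fun t => trace (A t * (A t)ᵀ) with hXdef
  set V : ℝ → ℝ := fun t => trace (A1 t * (A t)ᵀ) + trace (A t * (A1 t)ᵀ) with hVdef
  set K : ℝ → ℝ := fun t => trace (A1 t * (A1 t)ᵀ) with hKdef
  set P : ℝ → ℝ := fun t => (A t).det ^ (1 - γ) with hPdef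
  set S : ℝ → ℝ := fun t => trace ((A t)⁻¹ * A1 t) with hSdef
  have hPpos : ∀ t, 0 < P t := fun t => Real.rpow_pos_of_pos (hdet t) _
  have hKnn : ∀ t, 0 ≤ K t := fun t => traceMulT_nonneg _
  have hunit : ∀ t, IsUnit ((A t).det) := fun t => isUnit_iff_ne_zero.mpr (hdet t).ne'
  have hAAinv : ∀ t, A t * (A t)⁻¹ = 1 := fun t => Matrix.mul_nonsing_inv _ (hunit t)
  -- trace identities involving A2
  have hA2eq : ∀ t, A2 t = P t • ((A t)⁻¹)ᵀ := fun t => hODE t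
  have tA2AT : ∀ t, trace (A2 t * (A t)ᵀ) = 3 * P t := by
    intro t
    rw [hA2eq t, Matrix.smul_mul, trace_smul, ← Matrix.transpose_mul, Matrix.trace_transpose,
      hAAinv t, Matrix.trace_one]
    simp [smul_eq_mul]; ring
  have tAA2T : ∀ t, trace (A t * (A2 t)ᵀ) = 3 * P t := by
    intro t
    rw [hA2eq t, Matrix.transpose_smul, Matrix.transpose_transpose, Matrix.mul_smul, trace_smul,
      hAAinv t, Matrix.trace_one]
    simp [smul_eq_mul]; ring
  have tA2A1T : ∀ t, trace (A2 t * (A1 t)ᵀ) = P t * S t := by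
    intro t
    rw [hA2eq t, Matrix.smul_mul, trace_smul, ← Matrix.transpose_mul, Matrix.trace_transpose,
      Matrix.trace_mul_comm]
    simp [hSdef, smul_eq_mul]
  have tA1A2T : ∀ t, trace (A1 t * (A2 t)ᵀ) = P t * S t := by
    intro t
    rw [hA2eq t, Matrix.transpose_smul, Matrix.transpose_transpose, Matrix.mul_smul, trace_smul,
      Matrix.trace_mul_comm]
    simp [hSdef, smul_eq_mul]
  have tadj : ∀ t, trace (adjugate (A t) * A1 t) = (A t).det * S t := by
    intro t
    rw [hSdef]
    simp only
    rw [Matrix.inv_def, Ring.inverse_eq_inv', Matrix.smul_mul, trace_smul, smul_eq_mul,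
      ← mul_assoc, mul_inv_cancel₀ (hdet t).ne', one_mul]
  -- derivatives of scalar quantities
  have hXV : ∀ t, HasDerivAt X (V t) t := fun t => traceMulT (h1 t) (h1 t)
  have hVW : ∀ t, HasDerivAt V (2 * K t + 6 * P t) t := by
    intro t
    have d1 := traceMulT (h2 t) (h1 t)
    have d2 := traceMulT (h1 t) (h2 t)
    have := d1.add d2
    rw [tA2AT t, tAA2T t] at this
    refine this.congr_deriv ?_
    simp only [hKdef]; ring
  have hKd : ∀ t, HasDerivAt K (2 * (P t * S t)) t := by
    intro t
    have := traceMulT (h2 t) (h2 t)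
    rw [tA2A1T t, tA1A2T t] at this
    convert this using 1; ring
  have hdetd : ∀ t, HasDerivAt (fun s => (A s).det) ((A t).det * S t) t := by
    intro t
    have := detD (h1 t)
    rwa [tadj t] at this
  have hPd : ∀ t, HasDerivAt P ((1 - γ) * (A t).det ^ (1 - γ - 1) * ((A t).det * S t)) t := by
    intro t
    have hr := Real.hasDerivAt_rpow_const (x := (A t).det) (p := 1 - γ) (Or.inl (hdet t).ne')
    exact hr.comp t (hdetd t)
  have hpow : ∀ t, (A t).det ^ (1 - γ - 1) * (A t).det = P t := by
    intro t
    have h := Real.rpow_add (hdet t) (1 - γ - 1) 1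
    rw [Real.rpow_one] at h
    rw [hPdef]
    simp only
    rw [← h]
    congr 1
    ring
  -- energy conservation
  set E0 : ℝ := K 0 / 2 + (γ - 1)⁻¹ * P 0 with hE0def
  set E : ℝ → ℝ := fun t => K t / 2 + (γ - 1)⁻¹ * P t with hEdef
  have hEd : ∀ t, HasDerivAt E 0 t := by
    intro t
    have := ((hKd t).div_const 2).add ((hPd t).const_mul ((γ - 1)⁻¹))
    refine this.congr_deriv ?_
    have h1 : (1 - γ) * (A t).det ^ (1 - γ - 1) * ((A t).det * S t) = -(γ - 1) * (P t * S t) := by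
      linear_combination ((1 - γ) * S t) * hpow t
    rw [h1]
    have h2 : (γ - 1)⁻¹ * (-(γ - 1) * (P t * S t)) = -(P t * S t) := by
      field_simp
    rw [h2]
    ring
  have hEconst : ∀ t, K t / 2 + (γ - 1)⁻¹ * P t = E0 := by
    intro t
    have h := is_const_of_deriv_eq_zero (fun s => (hEd s).differentiableAt)
      (fun s => (hEd s).deriv) t 0
    simpa [hEdef, hE0def] using h
  have hE0pos : 0 < E0 := by
    have hv : 0 < (γ - 1)⁻¹ * P 0 := mul_pos (inv_pos.mpr hγ1) (hPpos 0)
    rw [hE0def]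
    nlinarith [hKnn 0]
  -- virial bounds
  set κ : ℝ := min 4 (6 * (γ - 1)) * E0 with hκdef
  set Λ : ℝ := max 4 (6 * (γ - 1)) * E0 with hΛdef
  have hκpos : 0 < κ := mul_pos (lt_min (by norm_num) (by linarith)) hE0pos
  have hΛκ : κ ≤ Λ := mul_le_mul_of_nonneg_right (min_le_max) hE0pos.le
  have hΛpos : 0 < Λ := lt_of_lt_of_le hκpos hΛκ
  have hWbounds : ∀ t, κ ≤ 2 * K t + 6 * P t ∧ 2 * K t + 6 * P t ≤ Λ := by
    intro t
    have hE := hEconst t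
    have hu : 0 ≤ K t / 2 := by linarith [hKnn t]
    have hv : 0 < (γ - 1)⁻¹ * P t := mul_pos (inv_pos.mpr hγ1) (hPpos t)
    have hP6 : 6 * P t = 6 * (γ - 1) * ((γ - 1)⁻¹ * P t) := by
      field_simp
    constructor
    · have h4 : min 4 (6 * (γ - 1)) ≤ 4 := min_le_left _ _
      have h6 : min 4 (6 * (γ - 1)) ≤ 6 * (γ - 1) := min_le_right _ _
      rw [hκdef, ← hE]
      nlinarith [mul_nonneg (sub_nonneg.mpr h4) hu, mul_nonneg (sub_nonneg.mpr h6) hv.le]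
    · have h4 : (4:ℝ) ≤ max 4 (6 * (γ - 1)) := le_max_left _ _
      have h6 : 6 * (γ - 1) ≤ max 4 (6 * (γ - 1)) := le_max_right _ _
      rw [hΛdef, ← hE]
      nlinarith [mul_nonneg (sub_nonneg.mpr h4) hu, mul_nonneg (sub_nonneg.mpr h6) hv.le]
  -- quadratic bounds on X
  have hlow : ∀ t, X 0 + V 0 * t + κ / 2 * t ^ 2 ≤ X t :=
    quad_lower X V (fun t => 2 * K t + 6 * P t) hXV hVW κ (fun t => (hWbounds t).1)
  have hupp : ∀ t, X t ≤ X 0 + V 0 * t + Λ / 2 * t ^ 2 := by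
    have := quad_lower (fun t => -X t) (fun t => -V t) (fun t => -(2 * K t + 6 * P t))
      (fun t => (hXV t).neg) (fun t => (hVW t).neg) (-Λ)
      (fun t => neg_le_neg (hWbounds t).2)
    intro t
    have ht := this t
    nlinarith [ht]
  -- positivity of X
  have hXpos : ∀ t, 0 < X t := by
    intro t
    rcases lt_or_eq_of_le (traceMulT_nonneg (A t)) with h | h
    · exact h
    · exfalso
      have hz : A t = 0 := by
        ext i j
        have hsum : ∑ i : Fin 3, ∑ j : Fin 3, A t i j * A t i j = 0 := by
          rw [← traceMulT_key]; exact h.symm ▸ h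
        have h1 : ∀ i ∈ Finset.univ, (0:ℝ) ≤ ∑ j : Fin 3, A t i j * A t i j :=
          fun i _ => Finset.sum_nonneg fun j _ => mul_self_nonneg _
        have h2 := (Finset.sum_eq_zero_iff_of_nonneg h1).mp hsum i (Finset.mem_univ i)
        have h3 : ∀ j ∈ Finset.univ, (0:ℝ) ≤ A t i j * A t i j :=
          fun j _ => mul_self_nonneg _
        have h4 := (Finset.sum_eq_zero_iff_of_nonneg h3).mp h2 j (Finset.mem_univ j)
        have := mul_self_eq_zero.mp h4
        simpa using this
      have := hdet t
      rw [hz] at this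
      simp at this
  -- continuity of X
  have hXcont : Continuous X := by
    have : Differentiable ℝ X := fun t => (hXV t).differentiableAt
    exact this.continuous
  clear_value X V K P S E E0 κ Λ
  -- constants
  set T : ℝ := 1 + 4 * |V 0| / κ with hTdef
  have hT1 : 1 ≤ T := by
    have h0 : 0 ≤ 4 * |V 0| / κ := by positivity
    rw [hTdef]
    linarith
  have hTκ : κ * T = κ + 4 * |V 0| := by
    rw [hTdef]
    field_simp
  obtain ⟨x₀, hx₀mem, hx₀min⟩ := (isCompact_Icc (a := -T) (b := T)).exists_isMinOn
    ⟨0, Set.mem_Icc.mpr ⟨by linarith, by linarith⟩⟩ hXcont.continuousOn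
  have hmpos : 0 < X x₀ := hXpos x₀
  have hTpos : (0:ℝ) < (1 + T) ^ 2 := by positivity
  set c : ℝ := min (κ / 16) (X x₀ / (1 + T) ^ 2) with hcdef
  set C : ℝ := |X 0| + |V 0| + Λ / 2 with hCdef
  have hcpos : 0 < c := lt_min (by positivity) (by positivity)
  have hmain : ∀ t : ℝ, c * (1 + |t|) ^ 2 ≤ X t ∧ X t ≤ C * (1 + |t|) ^ 2 := by
    intro t
    constructor
    · rcases le_or_gt |t| T with hcase | hcase
      · have hmem : t ∈ Set.Icc (-T) T := by
          rw [Set.mem_Icc]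
          exact ⟨by linarith [neg_abs_le t], by linarith [le_abs_self t]⟩
        calc c * (1 + |t|) ^ 2 ≤ (X x₀ / (1 + T) ^ 2) * (1 + |t|) ^ 2 := by
              apply mul_le_mul_of_nonneg_right (min_le_right _ _) (by positivity)
          _ ≤ (X x₀ / (1 + T) ^ 2) * (1 + T) ^ 2 := by
              apply mul_le_mul_of_nonneg_left _ (by positivity)
              have : 0 ≤ |t| := abs_nonneg t
              nlinarith
          _ = X x₀ := div_mul_cancel₀ _ hTpos.ne'
          _ ≤ X t := isMinOn_iff.mp hx₀min t hmem
      · have hq := hlow t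
        have hs : T < |t| := hcase
        have h1s : 1 ≤ |t| := le_trans hT1 hs.le
        have hVt : V 0 * t ≥ -(|V 0| * |t|) := by
          rw [← abs_mul]
          exact neg_abs_le _
        have hsq : t ^ 2 = |t| ^ 2 := (sq_abs t).symm
        have hkey : κ * |t| ≥ κ + 4 * |V 0| := by
          rw [← hTκ]
          exact mul_le_mul_of_nonneg_left hs.le hκpos.le
        -- κ/4 |t|^2 ≥ |V0| |t|  since κ |t| ≥ 4 |V0|
        have hquad : |V 0| * |t| ≤ κ / 4 * |t| ^ 2 := by
          have h4V : 4 * |V 0| ≤ κ * |t| := by linarith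
          nlinarith [abs_nonneg t, abs_nonneg (V 0)]
        have hc16 : c ≤ κ / 16 := hcdef ▸ min_le_left _ _
        have h2 : (1 + |t|) ^ 2 ≤ 4 * |t| ^ 2 := by nlinarith
        have hX0 := hXpos 0
        calc c * (1 + |t|) ^ 2 ≤ κ / 16 * (1 + |t|) ^ 2 := by
              apply mul_le_mul_of_nonneg_right hc16 (by positivity)
          _ ≤ κ / 4 * |t| ^ 2 := by nlinarith [hκpos]
          _ ≤ X t := by
              rw [hsq] at hq
              linarith [hq, hVt, hquad, hX0]
    · have hu := hupp t
      have h1 : X 0 ≤ |X 0| := le_abs_self _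
      have h2 : V 0 * t ≤ |V 0| * |t| := by rw [← abs_mul]; exact le_abs_self _
      have hsq : t ^ 2 = |t| ^ 2 := (sq_abs t).symm
      rw [hsq] at hu
      rw [hCdef]
      nlinarith [hu, h1, h2, abs_nonneg t, abs_nonneg (X 0), abs_nonneg (V 0), hΛpos,
        mul_nonneg (abs_nonneg (X 0)) (abs_nonneg t),
        mul_nonneg (mul_nonneg (abs_nonneg (X 0)) (abs_nonneg t)) (abs_nonneg t),
        mul_nonneg (abs_nonneg (V 0)) (abs_nonneg t),
        mul_nonneg (mul_nonneg (abs_nonneg (V 0)) (abs_nonneg t)) (abs_nonneg t),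
        mul_nonneg hΛpos.le (abs_nonneg t), sq_nonneg (|t|)]
  refine ⟨c, C, hcpos, ?_, fun t => by simpa [hXdef] using hmain t⟩
  have h0 := hmain 0
  simp only [abs_zero] at h0
  nlinarith [h0.1, h0.2]
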